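/- Let M ∈ ℝ^{n×n} be skew-symmetric and A = I − M. Define Φ(v) = (I − α(v)A)v with α(v) = ⟨v,Av⟩/⟨Av,Av⟩. Then for every nonzero v, ‖Φ(v)‖ ≤ (m*/√(1 + (m*)²)) ‖v‖, where m* is the spectral radius of M. Moreover, if q is nonzero and lies in the M-invariant 2D subspace span{Q_j} associated with eigenvalues ±i|m_j|, then Φ(q) ∈ span{Q_j} and ‖Φ(q)‖/‖q‖ = |m_j|/√(1 + |m_j|²). -/

import Mathlib

open Matrix RealInnerProductSpace

lemma dot_self_nonneg' {n : ℕ} (v : Fin n → ℝ) : 0 ≤ v ⬝ᵥ v :=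
  Finset.sum_nonneg fun j _ => mul_self_nonneg _

lemma dot_self_pos' {n : ℕ} (v : Fin n → ℝ) (hv : v ≠ 0) : 0 < v ⬝ᵥ v := by
  rcases Function.ne_iff.mp hv with ⟨i, hi⟩
  exact Finset.sum_pos' (fun j _ => mul_self_nonneg _)
    ⟨i, Finset.mem_univ i, mul_self_pos.mpr hi⟩

lemma inner_eq_dot {n : ℕ} (x y : EuclideanSpace ℝ (Fin n)) :
    ⟪x, y⟫ = (x : Fin n → ℝ) ⬝ᵥ (y : Fin n → ℝ) := by
  simp [EuclideanSpace.inner_eq_star_dotProduct, dotProduct, mul_comm]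

lemma map_mulVec_ofReal {n : ℕ} (M : Matrix (Fin n) (Fin n) ℝ) (u : Fin n → ℝ) :
    (M.map (Complex.ofReal)) *ᵥ (fun i => (u i : ℂ)) = fun i => ((M *ᵥ u) i : ℂ) := by
  funext i
  simp [Matrix.mulVec, dotProduct, Matrix.map_apply]

/-- key: eigenvalue bound for `Mᵀ*M` eigenvector. -/
lemma sq_eig_le {n : ℕ} (M : Matrix (Fin n) (Fin n) ℝ) (hM : Mᵀ = -M) (mstar : ℝ)
    (hb : ∀ μ : ℂ, Module.End.HasEigenvalue (Matrix.toLin' (M.map (Complex.ofReal))) μ →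
      ‖μ‖ ≤ mstar)
    (l : ℝ) (hl : 0 ≤ l) (w : Fin n → ℝ) (hw : w ≠ 0)
    (heig : M *ᵥ (M *ᵥ w) = (-l) • w) : l ≤ mstar ^ 2 := by
  set Mc := M.map (Complex.ofReal) with hMc
  set wc : Fin n → ℂ := fun i => (w i : ℂ) with hwc
  have hwc0 : wc ≠ 0 := by
    intro h
    apply hw
    funext i
    have h2 := congrFun h i
    simp only [hwc, Pi.zero_apply] at h2
    exact_mod_cast h2
  have hMc2 : Mc *ᵥ (Mc *ᵥ wc) = ((-l : ℝ) : ℂ) • wc := by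
    rw [hwc, map_mulVec_ofReal, map_mulVec_ofReal, heig]
    funext i
    simp [Pi.smul_apply]
  set s := Real.sqrt l with hs
  have hs0 : 0 ≤ s := Real.sqrt_nonneg _
  have hs2 : s ^ 2 = l := Real.sq_sqrt hl
  set u : Fin n → ℂ := Mc *ᵥ wc + (Complex.I * s) • wc with hu
  have hIs : (Complex.I * s) * (Complex.I * s) = ((-l : ℝ) : ℂ) := by
    have h1 : (Complex.I * s) * (Complex.I * s) = (Complex.I * Complex.I) * (s * s) := by ring
    rw [h1, Complex.I_mul_I]
    push_cast [← hs2]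
    ring
  have key : Mc *ᵥ u = (Complex.I * s) • u := by
    rw [hu, mulVec_add, mulVec_smul, hMc2, smul_add, smul_smul, hIs, add_comm]
  have habs : ‖Complex.I * s‖ = s := by
    simp [Complex.norm_I, Complex.norm_real, abs_of_nonneg hs0]
  have hle : s ≤ mstar := by
    by_cases hu0 : u = 0
    · have hev : Mc *ᵥ wc = (-(Complex.I * s)) • wc := by
        have := hu0
        rw [hu] at this
        have h2 : Mc *ᵥ wc = -((Complex.I * s) • wc) := by
          rw [eq_neg_iff_add_eq_zero]; exact this
        rw [h2, neg_smul]
      have hE : Module.End.HasEigenvalue (Matrix.toLin' Mc) (-(Complex.I * s)) := by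
        apply Module.End.hasEigenvalue_of_hasEigenvector (x := wc)
        refine ⟨Module.End.mem_eigenspace_iff.mpr ?_, hwc0⟩
        rw [Matrix.toLin'_apply, hev]
      have := hb _ hE
      rwa [norm_neg, habs] at this
    · have hE : Module.End.HasEigenvalue (Matrix.toLin' Mc) (Complex.I * s) := by
        apply Module.End.hasEigenvalue_of_hasEigenvector (x := u)
        refine ⟨Module.End.mem_eigenspace_iff.mpr ?_, hu0⟩
        rw [Matrix.toLin'_apply, key]
      have := hb _ hE
      rwa [habs] at this
  calc l = s ^ 2 := hs2.symm
    _ ≤ mstar ^ 2 := by nlinarith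

lemma key_bound {n : ℕ} (M : Matrix (Fin n) (Fin n) ℝ) (hM : Mᵀ = -M) (mstar : ℝ)
    (hb : ∀ μ : ℂ, Module.End.HasEigenvalue (Matrix.toLin' (M.map (Complex.ofReal))) μ →
      ‖μ‖ ≤ mstar)
    (v : Fin n → ℝ) : (M *ᵥ v) ⬝ᵥ (M *ᵥ v) ≤ mstar ^ 2 * (v ⬝ᵥ v) := by
  set S := Mᵀ * M with hSdef
  have hS : S.IsHermitian := by simpa using isHermitian_conjTranspose_mul_self M
  have hdotS : ∀ x : Fin n → ℝ, x ⬝ᵥ (S *ᵥ x) = (M *ᵥ x) ⬝ᵥ (M *ᵥ x) := by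
    intro x
    rw [hSdef, ← mulVec_mulVec, Matrix.dotProduct_mulVec, Matrix.vecMul_transpose]
  -- eigen data
  set b := hS.eigenvectorBasis with hbdef
  have hw1 : ∀ j, (⇑(b j) : Fin n → ℝ) ⬝ᵥ ⇑(b j) = 1 := by
    intro j
    have h := orthonormal_iff_ite.mp b.orthonormal j j
    rw [inner_eq_dot] at h
    simpa using h
  have hwne : ∀ j, (⇑(b j) : Fin n → ℝ) ≠ 0 := by
    intro j h
    have := hw1 j
    rw [h] at this
    simp [dotProduct] at this
  have heig : ∀ j, S *ᵥ ⇑(b j) = hS.eigenvalues j • ⇑(b j) := hS.mulVec_eigenvectorBasis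
  have hnn : ∀ j, 0 ≤ hS.eigenvalues j := by
    intro j
    have h1 : (⇑(b j) : Fin n → ℝ) ⬝ᵥ (S *ᵥ ⇑(b j)) = hS.eigenvalues j := by
      rw [heig j, dotProduct_smul, hw1 j]; simp
    rw [← h1, hdotS]
    exact dot_self_nonneg' _
  have hle : ∀ j, hS.eigenvalues j ≤ mstar ^ 2 := by
    intro j
    apply sq_eig_le M hM mstar hb _ (hnn j) _ (hwne j)
    have h1 : (Mᵀ * M) *ᵥ ⇑(b j) = hS.eigenvalues j • ⇑(b j) := heig j
    rw [hM, neg_mul, neg_mulVec] at h1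
    have h2 : (M * M) *ᵥ ⇑(b j) = -(hS.eigenvalues j • ⇑(b j)) := by
      rw [← neg_neg ((M*M) *ᵥ ⇑(b j)), h1]
    rw [← mulVec_mulVec] at h2
    rw [h2, neg_smul]
  -- Rayleigh
  set ve : EuclideanSpace ℝ (Fin n) := WithLp.toLp 2 v with hve
  set Sv : EuclideanSpace ℝ (Fin n) := WithLp.toLp 2 (S *ᵥ v) with hSv
  have hrepr : ∀ (x y : EuclideanSpace ℝ (Fin n)), ⟪x, y⟫ = ∑ j, b.repr x j * b.repr y j := by
    intro x y
    have h := b.repr.inner_map_map x y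
    rw [← h, PiLp.inner_apply]
    simp [RCLike.inner_apply, mul_comm]
  have hst : Sᵀ = S := by rw [hSdef, transpose_mul, transpose_transpose]
  have hreprS : ∀ j, b.repr Sv j = hS.eigenvalues j * b.repr ve j := by
    intro j
    rw [b.repr_apply_apply, b.repr_apply_apply, inner_eq_dot, inner_eq_dot]
    calc (⇑(b j) : Fin n → ℝ) ⬝ᵥ (Sv : Fin n → ℝ)
        = (⇑(b j) : Fin n → ℝ) ⬝ᵥ (S *ᵥ v) := rfl
      _ = (Sᵀ *ᵥ ⇑(b j)) ⬝ᵥ v := by rw [Matrix.dotProduct_mulVec, ← Matrix.mulVec_transpose]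
      _ = (hS.eigenvalues j • (⇑(b j) : Fin n → ℝ)) ⬝ᵥ v := by rw [hst, heig j]
      _ = hS.eigenvalues j * ((⇑(b j) : Fin n → ℝ) ⬝ᵥ (ve : Fin n → ℝ)) := by
          rw [smul_dotProduct]; rfl
  have hmain : (M *ᵥ v) ⬝ᵥ (M *ᵥ v) = ∑ j, hS.eigenvalues j * (b.repr ve j) ^ 2 := by
    rw [← hdotS v]
    have h1 : v ⬝ᵥ (S *ᵥ v) = ⟪ve, Sv⟫ := (inner_eq_dot ve Sv).symm
    rw [h1, hrepr ve Sv]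
    apply Finset.sum_congr rfl
    intro j _
    rw [hreprS j]
    ring
  have hv2 : v ⬝ᵥ v = ∑ j, (b.repr ve j) ^ 2 := by
    have h1 : v ⬝ᵥ v = ⟪ve, ve⟫ := (inner_eq_dot ve ve).symm
    rw [h1, hrepr ve ve]
    apply Finset.sum_congr rfl
    intro j _
    ring
  rw [hmain, hv2, Finset.mul_sum]
  apply Finset.sum_le_sum
  intro j _
  have := sq_nonneg (b.repr ve j)
  nlinarith [hle j, hnn j]

theorem stmt15 {n : ℕ} (M : Matrix (Fin n) (Fin n) ℝ) (hM : Mᵀ = -M)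
    (A : Matrix (Fin n) (Fin n) ℝ) (hA : A = 1 - M)
    (mstar : ℝ)
    (hstar_bound : ∀ μ : ℂ,
      Module.End.HasEigenvalue (Matrix.toLin' (M.map (Complex.ofReal))) μ →
        ‖μ‖ ≤ mstar)
    (hstar_mem : ∃ μ : ℂ,
      Module.End.HasEigenvalue (Matrix.toLin' (M.map (Complex.ofReal))) μ ∧
        ‖μ‖ = mstar)
    (α : (Fin n → ℝ) → ℝ)
    (hα : ∀ v, α v = v ⬝ᵥ A.mulVec v / (A.mulVec v ⬝ᵥ A.mulVec v))
    (Φ : (Fin n → ℝ) → (Fin n → ℝ))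
    (hΦ : ∀ v, Φ v = v - α v • A.mulVec v) :
    (∀ v : Fin n → ℝ, v ≠ 0 →
      Real.sqrt (Φ v ⬝ᵥ Φ v) ≤ mstar / Real.sqrt (1 + mstar ^ 2) * Real.sqrt (v ⬝ᵥ v)) ∧
    (∀ (q1 q2 : Fin n → ℝ) (m c1 c2 : ℝ) (q : Fin n → ℝ),
      q1 ⬝ᵥ q1 = 1 → q2 ⬝ᵥ q2 = 1 → q1 ⬝ᵥ q2 = 0 →
      M.mulVec q1 = m • q2 → M.mulVec q2 = -m • q1 →
      q = c1 • q1 + c2 • q2 → q ≠ 0 →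
      (∃ d1 d2 : ℝ, Φ q = d1 • q1 + d2 • q2) ∧
      Real.sqrt (Φ q ⬝ᵥ Φ q) = |m| / Real.sqrt (1 + m ^ 2) * Real.sqrt (q ⬝ᵥ q)) := by
  have hm0 : 0 ≤ mstar := by
    obtain ⟨μ, _, h2⟩ := hstar_mem
    rw [← h2]; exact norm_nonneg μ
  -- generic dot product facts
  have hvMv : ∀ v : Fin n → ℝ, v ⬝ᵥ (M *ᵥ v) = 0 := by
    intro v
    have h1 : v ⬝ᵥ (M *ᵥ v) = (Mᵀ *ᵥ v) ⬝ᵥ v := by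
      rw [Matrix.dotProduct_mulVec, ← Matrix.mulVec_transpose]
    rw [hM, neg_mulVec, neg_dotProduct] at h1
    have h2 : (M *ᵥ v) ⬝ᵥ v = v ⬝ᵥ (M *ᵥ v) := dotProduct_comm _ _
    rw [h2] at h1
    linarith
  have hAv : ∀ v : Fin n → ℝ, A *ᵥ v = v - M *ᵥ v := by
    intro v; rw [hA, sub_mulVec, one_mulVec]
  have hvAv : ∀ v : Fin n → ℝ, v ⬝ᵥ (A *ᵥ v) = v ⬝ᵥ v := by
    intro v; rw [hAv, dotProduct_sub, hvMv, sub_zero]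
  have hAvAv : ∀ v : Fin n → ℝ, (A *ᵥ v) ⬝ᵥ (A *ᵥ v) = v ⬝ᵥ v + (M *ᵥ v) ⬝ᵥ (M *ᵥ v) := by
    intro v
    rw [hAv, sub_dotProduct, dotProduct_sub, dotProduct_sub, hvMv]
    have h2 : (M *ᵥ v) ⬝ᵥ v = 0 := by rw [dotProduct_comm]; exact hvMv v
    rw [h2]
    ring
  constructor
  · -- part 1
    intro v hv
    set a := v ⬝ᵥ v with ha
    set bb := (M *ᵥ v) ⬝ᵥ (M *ᵥ v) with hbb
    have ha0 : 0 < a := dot_self_pos' v hv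
    have hb0 : 0 ≤ bb := dot_self_nonneg' _
    have hab : 0 < a + bb := by linarith
    have hαv : α v = a / (a + bb) := by rw [hα, hvAv, hAvAv]
    have hΦΦ : Φ v ⬝ᵥ Φ v = a * bb / (a + bb) := by
      rw [hΦ]
      rw [sub_dotProduct, dotProduct_sub, dotProduct_sub, smul_dotProduct, dotProduct_smul,
        smul_dotProduct, dotProduct_smul, hvAv]
      have h3 : (A *ᵥ v) ⬝ᵥ v = a := by rw [dotProduct_comm]; exact hvAv v
      rw [h3, hAvAv, hαv, ← ha, ← hbb]
      simp only [smul_eq_mul]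
      field_simp [hab.ne']
      ring
    have hkey : bb ≤ mstar ^ 2 * a := key_bound M hM mstar hstar_bound v
    have h1m : (0:ℝ) < 1 + mstar ^ 2 := by positivity
    have hineq : a * bb / (a + bb) ≤ mstar ^ 2 * a / (1 + mstar ^ 2) := by
      rw [div_le_div_iff₀ hab h1m]
      nlinarith
    rw [hΦΦ]
    calc Real.sqrt (a * bb / (a + bb)) ≤ Real.sqrt (mstar ^ 2 * a / (1 + mstar ^ 2)) :=
          Real.sqrt_le_sqrt hineq
      _ = mstar / Real.sqrt (1 + mstar ^ 2) * Real.sqrt a := by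
          rw [Real.sqrt_div (by positivity), Real.sqrt_mul (sq_nonneg mstar),
            Real.sqrt_sq hm0]
          ring
  · -- part 2
    intro q1 q2 m c1 c2 q h11 h22 h12 hMq1 hMq2 hq hq0
    have h21 : q2 ⬝ᵥ q1 = 0 := by rw [dotProduct_comm]; exact h12
    have h1m : (0:ℝ) < 1 + m ^ 2 := by positivity
    set r := c1 ^ 2 + c2 ^ 2 with hr
    have hqq : q ⬝ᵥ q = r := by
      rw [hq]
      simp only [dotProduct_add, add_dotProduct, dotProduct_smul, smul_dotProduct,
        h11, h22, h12, h21, smul_eq_mul]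
      ring
    have hr0 : 0 < r := by rw [← hqq]; exact dot_self_pos' q hq0
    have hMq : M *ᵥ q = (-(m * c2)) • q1 + (m * c1) • q2 := by
      rw [hq, mulVec_add, mulVec_smul, mulVec_smul, hMq1, hMq2]
      module
    have hAq : A *ᵥ q = (c1 + m * c2) • q1 + (c2 - m * c1) • q2 := by
      rw [hAv, hMq, hq]
      module
    have hqAq : q ⬝ᵥ (A *ᵥ q) = r := by
      rw [hAq, hq]
      simp only [dotProduct_add, add_dotProduct, dotProduct_smul, smul_dotProduct,
        h11, h22, h12, h21, smul_eq_mul]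
      ring
    have hAqAq : (A *ᵥ q) ⬝ᵥ (A *ᵥ q) = r * (1 + m ^ 2) := by
      rw [hAq]
      simp only [dotProduct_add, add_dotProduct, dotProduct_smul, smul_dotProduct,
        h11, h22, h12, h21, smul_eq_mul]
      ring
    have hαq : α q = 1 / (1 + m ^ 2) := by
      rw [hα, hqAq, hAqAq]
      field_simp [hr0.ne']
    have hΦq : Φ q = (c1 - (c1 + m * c2) / (1 + m ^ 2)) • q1
        + (c2 - (c2 - m * c1) / (1 + m ^ 2)) • q2 := by
      rw [hΦ, hαq, hAq, hq]
      match_scalars <;> field_simp <;> ring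
    refine ⟨⟨_, _, hΦq⟩, ?_⟩
    have hPP : Φ q ⬝ᵥ Φ q = m ^ 2 * r / (1 + m ^ 2) := by
      rw [hΦq]
      simp only [dotProduct_add, add_dotProduct, dotProduct_smul, smul_dotProduct,
        h11, h22, h12, h21, smul_eq_mul]
      field_simp
      ring
    rw [hPP, hqq]
    rw [show m ^ 2 * r / (1 + m ^ 2) = m ^ 2 * r / (1 + m ^ 2) from rfl,
      Real.sqrt_div (by positivity), Real.sqrt_mul (sq_nonneg m), Real.sqrt_sq_eq_abs]
    ring
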